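/- Let p, q ∈ (1,∞), n a nonnegative integer, and r ∈ (1−p, 1]. Set v = p/(r+p−1), so 1/v = (r+p−1)/p ∈ (0,1]. Then ∫₀^{π_{p,q}/2} cos_{p,q}^{pn+r}(t) dt = [(1/v)_n / ((1/v + 1/q)_n)] · π_{v*,q}/2, where for v = 1 (i.e. r = 1, v* = ∞) one uses the convention π_{∞,q} = 2. -/

import Mathlib

open Set MeasureTheory Filter

/-- Generalized arcsine: `arcsin_{p,q}(x) = ∫₀ˣ (1 - tᵠ)^(-1/p) dt`. -/
noncomputable def gArcsin (p q x : ℝ) : ℝ := ∫ t in (0:ℝ)..x, (1 - t ^ q) ^ (-(1 / p))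

/-- Generalized pi: `π_{p,q} = 2 ∫₀¹ (1 - tᵠ)^(-1/p) dt`. -/
noncomputable def gPi (p q : ℝ) : ℝ := 2 * gArcsin p q 1

/-- `S` is the generalized sine `sin_{p,q}` (the inverse of `gArcsin p q` on `[0,1]`). -/
def IsGSin (p q : ℝ) (S : ℝ → ℝ) : Prop :=
  ∀ y ∈ Icc (0:ℝ) 1, S (gArcsin p q y) = y

/-- `C` is the generalized cosine `cos_{p,q}`, the derivative of `S = sin_{p,q}`
on `[0, π_{p,q}/2]`. -/
def IsGCos (p q : ℝ) (S C : ℝ → ℝ) : Prop :=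
  ∀ x ∈ Icc (0:ℝ) (gPi p q / 2), HasDerivWithinAt S (C x) (Icc (0:ℝ) (gPi p q / 2)) x

section Aux

variable {p q : ℝ}

lemma aux_rpow_le_self (hq : 1 ≤ q) {t : ℝ} (h0 : 0 ≤ t) (h1 : t ≤ 1) : t ^ q ≤ t := by
  rcases eq_or_lt_of_le h0 with h | h
  · rw [← h, Real.zero_rpow (by linarith)]
  · calc t ^ q ≤ t ^ (1:ℝ) := Real.rpow_le_rpow_of_exponent_ge h h1 hq
    _ = t := Real.rpow_one t

lemma aux_base_nonneg (hq : 0 ≤ q) {t : ℝ} (h0 : 0 ≤ t) (h1 : t ≤ 1) : 0 ≤ 1 - t ^ q := by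
  have := Real.rpow_le_one h0 h1 hq
  linarith

lemma aux_base_pos (hq : 0 < q) {t : ℝ} (h0 : 0 ≤ t) (h1 : t < 1) : 0 < 1 - t ^ q := by
  have := Real.rpow_lt_one h0 h1 hq
  linarith

/-- continuity of `t ↦ (1-t^q)^s` at points with `1 - t^q ≠ 0` or `0 ≤ s`. -/
lemma aux_contAt (hq : 0 < q) {s t : ℝ} (h : 1 - t ^ q ≠ 0 ∨ 0 ≤ s) :
    ContinuousAt (fun t : ℝ => (1 - t ^ q) ^ s) t := by
  have hinner : ContinuousAt (fun t : ℝ => 1 - t ^ q) t :=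
    continuousAt_const.sub (Real.continuousAt_rpow_const t q (Or.inr hq.le))
  exact hinner.rpow_const h

lemma aux_intInt (hq : 1 ≤ q) {s : ℝ} (hs : -1 < s) :
    IntervalIntegrable (fun t : ℝ => (1 - t ^ q) ^ s) volume 0 1 := by
  rcases le_or_gt 0 s with hs0 | hs0
  · apply ContinuousOn.intervalIntegrable
    intro t _
    exact (aux_contAt (by linarith) (Or.inr hs0)).continuousWithinAt
  · have hmaj : IntervalIntegrable (fun t : ℝ => (1 - t) ^ s) volume 0 1 := by
      have := (intervalIntegral.intervalIntegrable_rpow' (a := 0) (b := 1) hs).comp_sub_left 1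
      simpa using this.symm
    apply hmaj.mono_fun
    · exact ((by fun_prop : Measurable fun t : ℝ => (1 - t ^ q) ^ s)).aestronglyMeasurable
    · filter_upwards [ae_restrict_mem measurableSet_uIoc] with t ht
      rw [uIoc_of_le (by norm_num : (0:ℝ) ≤ 1)] at ht
      have h0 : 0 < t := ht.1
      have h1 : t ≤ 1 := ht.2
      have hb0 : 0 ≤ 1 - t ^ q := aux_base_nonneg (by linarith) h0.le h1
      rw [Real.norm_eq_abs, Real.norm_eq_abs, abs_of_nonneg (Real.rpow_nonneg hb0 s),
        abs_of_nonneg (Real.rpow_nonneg (by linarith) s)]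
      rcases eq_or_lt_of_le h1 with rfl | h
      · simp [Real.one_rpow, Real.zero_rpow (by linarith : s ≠ 0)]
      · exact Real.rpow_le_rpow_of_nonpos (by linarith) (by nlinarith [aux_rpow_le_self hq h0.le h1]) hs0.le

lemma aux_H_int (hp : 1 < p) (hq : 1 < q) :
    IntervalIntegrable (fun t : ℝ => (1 - t ^ q) ^ (-(1 / p))) volume 0 1 := by
  apply aux_intInt hq.le
  have : 1 / p < 1 := by
    rw [div_lt_one (by linarith)]; linarith
  linarith

lemma aux_int_sub (hp : 1 < p) (hq : 1 < q) {x y : ℝ} (hx : x ∈ Icc (0:ℝ) 1)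
    (hy : y ∈ Icc (0:ℝ) 1) :
    IntervalIntegrable (fun t : ℝ => (1 - t ^ q) ^ (-(1 / p))) volume x y :=
  (aux_H_int hp hq).mono_set (by
    rw [uIcc_of_le (by norm_num : (0:ℝ) ≤ 1)]
    exact uIcc_subset_Icc hx hy)

lemma gArcsin_strictMono (hp : 1 < p) (hq : 1 < q) :
    StrictMonoOn (gArcsin p q) (Icc 0 1) := by
  intro x hx y hy hxy
  have h1 : IntervalIntegrable (fun t : ℝ => (1 - t ^ q) ^ (-(1 / p))) volume 0 x :=
    aux_int_sub hp hq (left_mem_Icc.mpr zero_le_one) hx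
  have h2 : IntervalIntegrable (fun t : ℝ => (1 - t ^ q) ^ (-(1 / p))) volume x y :=
    aux_int_sub hp hq hx hy
  have key : gArcsin p q x + ∫ t in x..y, (1 - t ^ q) ^ (-(1 / p)) = gArcsin p q y :=
    intervalIntegral.integral_add_adjacent_intervals h1 h2
  have hpos : 0 < ∫ t in x..y, (1 - t ^ q) ^ (-(1 / p)) := by
    apply intervalIntegral.intervalIntegral_pos_of_pos_on h2 _ hxy
    intro t ht
    exact Real.rpow_pos_of_pos
      (aux_base_pos (by linarith) (le_trans hx.1 ht.1.le) (lt_of_lt_of_le ht.2 hy.2)) _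
  linarith

lemma gArcsin_zero : gArcsin p q 0 = 0 := intervalIntegral.integral_same

lemma gArcsin_continuousOn (hp : 1 < p) (hq : 1 < q) :
    ContinuousOn (gArcsin p q) (Icc 0 1) := by
  have := intervalIntegral.continuousOn_primitive_interval (a := (0:ℝ)) (b := 1)
      (μ := volume) (f := fun t : ℝ => (1 - t ^ q) ^ (-(1 / p))) ?_
  · rwa [uIcc_of_le (by norm_num : (0:ℝ) ≤ 1)] at this
  · rw [uIcc_of_le (by norm_num : (0:ℝ) ≤ 1)]
    exact (intervalIntegrable_iff_integrableOn_Icc_of_le (by norm_num)).1 (aux_H_int hp hq)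

lemma gArcsin_one_pos (hp : 1 < p) (hq : 1 < q) : 0 < gArcsin p q 1 := by
  have := gArcsin_strictMono hp hq (left_mem_Icc.mpr zero_le_one)
    (right_mem_Icc.mpr zero_le_one) zero_lt_one
  rwa [gArcsin_zero] at this

lemma gArcsin_hasDerivAt (hp : 1 < p) (hq : 1 < q) {y : ℝ} (hy : y ∈ Ioo (0:ℝ) 1) :
    HasDerivAt (gArcsin p q) ((1 - y ^ q) ^ (-(1 / p))) y := by
  apply intervalIntegral.integral_hasDerivAt_right
  · exact aux_int_sub hp hq (left_mem_Icc.mpr zero_le_one) ⟨hy.1.le, hy.2.le⟩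
  · exact ((by fun_prop : Measurable fun t : ℝ =>
      (1 - t ^ q) ^ (-(1 / p)))).aestronglyMeasurable.stronglyMeasurableAtFilter
  · exact aux_contAt (by linarith) (Or.inl (ne_of_gt (aux_base_pos (by linarith) hy.1.le hy.2)))

lemma gArcsin_image (hp : 1 < p) (hq : 1 < q) :
    gArcsin p q '' Ioo 0 1 = Ioo 0 (gArcsin p q 1) := by
  apply Subset.antisymm
  · rintro _ ⟨y, hy, rfl⟩
    constructor
    · have := gArcsin_strictMono hp hq (left_mem_Icc.mpr zero_le_one)
        ⟨hy.1.le, hy.2.le⟩ hy.1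
      rwa [gArcsin_zero] at this
    · exact gArcsin_strictMono hp hq ⟨hy.1.le, hy.2.le⟩
        (right_mem_Icc.mpr zero_le_one) hy.2
  · have := intermediate_value_Ioo (zero_le_one) (gArcsin_continuousOn hp hq)
    rwa [gArcsin_zero] at this

end Aux

section Main

variable {p q : ℝ}

lemma C_eq (hp : 1 < p) (hq : 1 < q) {S C : ℝ → ℝ} (hS : IsGSin p q S) (hC : IsGCos p q S C)
    {y : ℝ} (hy : y ∈ Ioo (0:ℝ) 1) :
    C (gArcsin p q y) = (1 - y ^ q) ^ (1 / p) := by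
  have hpi2 : gPi p q / 2 = gArcsin p q 1 := by unfold gPi; ring
  have h0y : 0 < gArcsin p q y := by
    have := gArcsin_strictMono hp hq (left_mem_Icc.mpr zero_le_one) ⟨hy.1.le, hy.2.le⟩ hy.1
    rwa [gArcsin_zero] at this
  have hy1 : gArcsin p q y < gArcsin p q 1 :=
    gArcsin_strictMono hp hq ⟨hy.1.le, hy.2.le⟩ (right_mem_Icc.mpr zero_le_one) hy.2
  have hmem : gArcsin p q y ∈ Icc 0 (gPi p q / 2) := by rw [hpi2]; exact ⟨h0y.le, hy1.le⟩
  have hSd := hC _ hmem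
  have hgd : HasDerivWithinAt (gArcsin p q) ((1 - y ^ q) ^ (-(1 / p))) (Icc 0 1) y :=
    (gArcsin_hasDerivAt hp hq hy).hasDerivWithinAt
  have hmaps : MapsTo (gArcsin p q) (Icc 0 1) (Icc 0 (gPi p q / 2)) := by
    rw [hpi2]
    intro z hz
    constructor
    · rw [← gArcsin_zero (p := p) (q := q)]
      exact (gArcsin_strictMono hp hq).monotoneOn (left_mem_Icc.mpr zero_le_one) hz hz.1
    · exact (gArcsin_strictMono hp hq).monotoneOn hz (right_mem_Icc.mpr zero_le_one) hz.2
  have hcomp := hSd.comp y hgd hmaps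
  have hid : HasDerivWithinAt (fun z : ℝ => z)
      (C (gArcsin p q y) * (1 - y ^ q) ^ (-(1 / p))) (Icc 0 1) y := by
    apply hcomp.congr (fun z hz => (hS z hz).symm) (hS y ⟨hy.1.le, hy.2.le⟩).symm
  have huniq : C (gArcsin p q y) * (1 - y ^ q) ^ (-(1 / p)) = 1 :=
    UniqueDiffWithinAt.eq_deriv _ ((uniqueDiffOn_Icc zero_lt_one) y (Ioo_subset_Icc_self hy))
      hid (hasDerivWithinAt_id y _)
  have hb : 0 < 1 - y ^ q := aux_base_pos (by linarith) hy.1.le hy.2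
  have hXpos : 0 < (1 - y ^ q) ^ (1 / p) := Real.rpow_pos_of_pos hb _
  rw [Real.rpow_neg hb.le] at huniq
  field_simp at huniq
  linarith

lemma subst_int (hp : 1 < p) (hq : 1 < q) {S C : ℝ → ℝ} (hS : IsGSin p q S)
    (hC : IsGCos p q S C) (m : ℝ) :
    ∫ t in (0:ℝ)..(gPi p q / 2), C t ^ m = ∫ y in (0:ℝ)..1, (1 - y ^ q) ^ ((m - 1) / p) := by
  have hp0 : (0:ℝ) < p := by linarith
  have hpi2 : gPi p q / 2 = gArcsin p q 1 := by unfold gPi; ring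
  have hpos := gArcsin_one_pos hp hq
  rw [hpi2, intervalIntegral.integral_of_le hpos.le,
    intervalIntegral.integral_of_le zero_le_one,
    MeasureTheory.integral_Ioc_eq_integral_Ioo, MeasureTheory.integral_Ioc_eq_integral_Ioo,
    ← gArcsin_image hp hq,
    MeasureTheory.integral_image_eq_integral_abs_deriv_smul measurableSet_Ioo
      (fun y hy => (gArcsin_hasDerivAt hp hq hy).hasDerivWithinAt)
      (((gArcsin_strictMono hp hq).injOn).mono Ioo_subset_Icc_self) _]
  apply MeasureTheory.setIntegral_congr_fun measurableSet_Ioo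
  intro y hy
  have hb : 0 < 1 - y ^ q := aux_base_pos (by linarith) hy.1.le hy.2
  simp only
  rw [smul_eq_mul, C_eq hp hq hS hC hy, abs_of_nonneg (Real.rpow_nonneg hb.le _),
    ← Real.rpow_mul hb.le, ← Real.rpow_add hb]
  congr 1
  field_simp
  ring

lemma rec_step (hq : 1 < q) {s : ℝ} (hs : -1 < s) :
    ∫ y in (0:ℝ)..1, (1 - y ^ q) ^ (s + 1)
      = ((s + 1) / (s + 1 + 1 / q)) * ∫ y in (0:ℝ)..1, (1 - y ^ q) ^ s := by
  have hq0 : (0:ℝ) < q := by linarith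
  have hs1 : (0:ℝ) < s + 1 := by linarith
  set J1 := ∫ y in (0:ℝ)..1, (1 - y ^ q) ^ (s + 1) with hJ1
  set J0 := ∫ y in (0:ℝ)..1, (1 - y ^ q) ^ s with hJ0
  have hint1 := (aux_intInt hq.le (show (-1:ℝ) < s + 1 by linarith)).const_mul (1 + q * (s + 1))
  have hint0 := (aux_intInt hq.le hs).const_mul (q * (s + 1))
  have key : ∫ y in (0:ℝ)..1,
      ((1 + q * (s + 1)) * (1 - y ^ q) ^ (s + 1) - (q * (s + 1)) * (1 - y ^ q) ^ s) = 0 := by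
    have hftc := intervalIntegral.integral_eq_sub_of_hasDeriv_right_of_le (a := 0) (b := 1)
      (f := fun y : ℝ => y * (1 - y ^ q) ^ (s + 1))
      (f' := fun y : ℝ =>
        (1 + q * (s + 1)) * (1 - y ^ q) ^ (s + 1) - (q * (s + 1)) * (1 - y ^ q) ^ s)
      zero_le_one ?_ ?_ ?_
    · rw [hftc]
      simp [Real.one_rpow, Real.zero_rpow (show s + 1 ≠ 0 by linarith)]
    · intro t _
      exact (continuousAt_id.mul (aux_contAt hq0 (Or.inr hs1.le))).continuousWithinAt
    · intro y hy
      have hb : 0 < 1 - y ^ q := aux_base_pos hq0 hy.1.le hy.2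
      have hy0 : (0:ℝ) < y := hy.1
      have hinner : HasDerivAt (fun y : ℝ => 1 - y ^ q) (-(q * y ^ (q - 1))) y := by
        simpa using (Real.hasDerivAt_rpow_const (x := y) (p := q) (Or.inl hy0.ne')).const_sub 1
      have houter : HasDerivAt (fun u : ℝ => u ^ (s + 1)) ((s + 1) * (1 - y ^ q) ^ s)
          (1 - y ^ q) := by
        have h := Real.hasDerivAt_rpow_const (x := 1 - y ^ q) (p := s + 1) (Or.inl hb.ne')
        have he : s + 1 - 1 = s := by ring
        rwa [he] at h
      have hφ := (hasDerivAt_id y).mul (houter.comp y hinner)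
      refine HasDerivAt.hasDerivWithinAt ?_
      convert hφ using 1
      · rfl
      · rfl
      simp only [Function.comp_apply, id_eq]
      have hyq : y ^ (q - 1) * y = y ^ q := by
        rw [← Real.rpow_add_one hy0.ne' (q - 1)]
        ring_nf
      have hbb : (1 - y ^ q) * (1 - y ^ q) ^ s = (1 - y ^ q) ^ (s + 1) := by
        rw [Real.rpow_add_one hb.ne' s]
        ring
      linear_combination (-(q * (s + 1))) * hbb + (q * (s + 1) * (1 - y ^ q) ^ s) * hyq
    · exact hint1.sub hint0
  rw [intervalIntegral.integral_sub hint1 hint0, intervalIntegral.integral_const_mul,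
    intervalIntegral.integral_const_mul, ← hJ1, ← hJ0] at key
  have hden : (0:ℝ) < s + 1 + 1 / q := by positivity
  rw [div_mul_eq_mul_div, eq_div_iff hden.ne']
  have hq' : q ≠ 0 := hq0.ne'
  field_simp
  nlinarith [key]

lemma iter_int (hq : 1 < q) {c : ℝ} (hc : -1 < c) (hc0 : 0 < c + 1) (n : ℕ) :
    ∫ y in (0:ℝ)..1, (1 - y ^ q) ^ (c + n)
      = (ascPochhammer ℝ n).eval (c + 1) / (ascPochhammer ℝ n).eval (c + 1 + 1 / q)
        * ∫ y in (0:ℝ)..1, (1 - y ^ q) ^ c := by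
  have hq0 : (0:ℝ) < q := by linarith
  induction n with
  | zero => simp
  | succ n ih =>
    have hsn : (-1:ℝ) < c + n := by
      have : (0:ℝ) ≤ n := Nat.cast_nonneg n
      linarith
    have step := rec_step hq hsn
    have hcast : (c + ((n:ℝ) + 1)) = (c + n) + 1 := by ring
    rw [Nat.cast_succ, hcast, step, ih, ascPochhammer_succ_right]
    simp only [Polynomial.eval_mul, Polynomial.eval_add, Polynomial.eval_X,
      Polynomial.eval_natCast]
    have h1q : (0:ℝ) < 1 / q := by positivity
    have hn0 : (0:ℝ) ≤ n := Nat.cast_nonneg n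
    have h1 : (0:ℝ) < (ascPochhammer ℝ n).eval (c + 1 + 1 / q) :=
      ascPochhammer_pos n _ (by linarith)
    have h2 : (0:ℝ) < c + 1 + 1 / q + n := by linarith
    have h3 : (0:ℝ) < c + n + 1 + 1 / q := by linarith
    set B := (ascPochhammer ℝ n).eval (c + 1 + 1 / q) with hB
    set A := (ascPochhammer ℝ n).eval (c + 1) with hA
    rw [show c + 1 + 1 / q + (n:ℝ) = c + n + 1 + 1 / q by ring]
    set D := c + n + 1 + 1 / q with hD
    field_simp
    ring

end Main

/-- Theorem 3.4, formula (3.4) (Wallis-type formula for `cos_{p,q}`): for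
`r ∈ (1-p, 1]` and `1/v = (r+p-1)/p`,
`∫₀^{π_{p,q}/2} cos_{p,q}^{pn+r} t dt = (1/v)ₙ/((1/v + 1/q)ₙ) · π_{v*,q}/2`.
(For `v = 1`, in Lean `v/(v-1) = 0` and `gPi 0 q = 2∫₀¹(1-t^q)^0 dt = 2`, which is
exactly the paper's convention `π_{∞,q} := 2`.) -/
theorem stmt_9 (p q r : ℝ) (n : ℕ) (hp : 1 < p) (hq : 1 < q)
    (hr : r ∈ Ioc (1 - p) (1 : ℝ))
    (v : ℝ) (hv : v = p / (r + p - 1))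
    (S C : ℝ → ℝ) (hS : IsGSin p q S) (hC : IsGCos p q S C) :
    ∫ t in (0:ℝ)..(gPi p q / 2), C t ^ (p * (n : ℝ) + r) =
      (ascPochhammer ℝ n).eval (1 / v) / (ascPochhammer ℝ n).eval (1 / v + 1 / q) *
        (gPi (v / (v - 1)) q / 2) := by
  have hp0 : (0:ℝ) < p := by linarith
  have hd : 0 < r + p - 1 := by have := hr.1; linarith
  set c : ℝ := (r - 1) / p with hc_def
  have hc : -1 < c := by
    rw [hc_def, lt_div_iff₀ hp0]
    have := hr.1
    linarith
  have hc1 : 0 < c + 1 := by linarith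
  have hm : (p * (n:ℝ) + r - 1) / p = c + n := by
    rw [hc_def]
    field_simp
    ring
  have h1v : 1 / v = c + 1 := by
    rw [hv, one_div_div, hc_def]
    field_simp
    ring
  have hgpi : gPi (v / (v - 1)) q / 2 = ∫ y in (0:ℝ)..1, (1 - y ^ q) ^ c := by
    have hexp : -(1 / (v / (v - 1))) = c := by
      rcases eq_or_ne r 1 with rfl | hr1
      · have hv1 : v = 1 := by
          rw [hv, show (1:ℝ) + p - 1 = p by ring, div_self hp0.ne']
        simp [hv1, hc_def]
      · have h1r : 1 - r ≠ 0 := fun h => hr1 (by linarith)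
        have hvv : v / (v - 1) = p / (1 - r) := by
          rw [hv, show p / (r + p - 1) - 1 = (1 - r) / (r + p - 1) by field_simp; ring]
          rw [div_div_div_cancel_right₀]
          exact hd.ne'
        rw [hvv, hc_def, one_div_div, show r - 1 = -(1 - r) by ring, neg_div]
    have : gPi (v / (v - 1)) q / 2 = gArcsin (v / (v - 1)) q 1 := by unfold gPi; ring
    rw [this]
    unfold gArcsin
    rw [hexp]
  rw [subst_int hp hq hS hC (p * (n:ℝ) + r), hm, iter_int hq hc hc1 n, h1v, hgpi]
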